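/- Let r, r', k, t be positive integers. Suppose G_1, …, G_t are pairwise edge-disjoint r-uniform hypergraphs on a common vertex set, none of which contains a tight cycle of length at most rk, and H_1, …, H_t are pairwise edge-disjoint r'-uniform hypergraphs on a common vertex set disjoint from the first, none of which contains a tight cycle of length more than r'k. Then the (r+r')-uniform hypergraph whose edges are all sets e ∪ f with e ∈ E(G_i) and f ∈ E(H_i) for some common index i ∈ [t] is tight-cycle-free. -/

import Mathlib

/-- The edge ("window") `{v i, v (i+1), …, v (i+r-1)}` of a tight cycle. -/
def tightWindow {V : Type*} [DecidableEq V] (r : ℕ) {ℓ : ℕ} (v : ZMod ℓ → V)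
    (i : ZMod ℓ) : Finset V :=
  Finset.image (fun j : Fin r => v (i + (j : ℕ))) Finset.univ

/-- `E` contains an `r`-uniform tight cycle of length `ℓ`: distinct vertices
`v 0, …, v (ℓ-1)` all of whose `r`-windows (indices mod `ℓ`) are edges of `E`. -/
def IsTightCycleIn {V : Type*} [DecidableEq V] (r ℓ : ℕ) (E : Set (Finset V)) : Prop :=
  ∃ v : ZMod ℓ → V, Function.Injective v ∧ ∀ i : ZMod ℓ, tightWindow r v i ∈ E

/-- `E` contains an `r`-uniform tight cycle of some length `ℓ > r`. -/
def HasTightCycle {V : Type*} [DecidableEq V] (r : ℕ) (E : Set (Finset V)) : Prop :=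
  ∃ ℓ : ℕ, r < ℓ ∧ IsTightCycleIn r ℓ E

/-- `E` is tight-cycle-free. -/
def TightCycleFree {V : Type*} [DecidableEq V] (r : ℕ) (E : Set (Finset V)) : Prop :=
  ¬ HasTightCycle r E

/-- `f_r(n)`: the maximum number of edges of an `r`-uniform tight-cycle-free
hypergraph on `n` vertices. -/
noncomputable def tightCycleTuran (r n : ℕ) : ℕ :=
  sSup {m | ∃ E : Finset (Finset (Fin n)), (∀ e ∈ E, e.card = r) ∧
    TightCycleFree r (E : Set (Finset (Fin n))) ∧ E.card = m}

/-- Generalisation of Lemma 2: if the `Gᵢ` are edge-disjoint `r`-uniform hypergraphs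
with no tight cycle of length at most `r*k`, and the `Hᵢ` are edge-disjoint
`r'`-uniform hypergraphs (on a disjoint vertex set) with no tight cycle of length
more than `r'*k`, then the `(r+r')`-uniform hypergraph with edges `e ∪ f`,
`e ∈ E(Gᵢ)`, `f ∈ E(Hᵢ)`, is tight-cycle-free. -/

lemma zmod_sub_val {ℓ : ℕ} [NeZero ℓ] {x y : ℕ} (hx : x < ℓ) (hy : y < ℓ) :
    ((x : ZMod ℓ) - (y : ZMod ℓ)).val = if y ≤ x then x - y else x + ℓ - y := by
  have h1 : ((x : ZMod ℓ) - (y : ZMod ℓ)) = ((x + (ℓ - y) : ℕ) : ZMod ℓ) := by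
    have : ((ℓ - y : ℕ) : ZMod ℓ) = -(y : ZMod ℓ) := by
      rw [Nat.cast_sub hy.le, ZMod.natCast_self]; ring
    rw [Nat.cast_add, this]; ring
  rw [h1, ZMod.val_natCast]
  rcases le_or_gt y x with h | h
  · have h2 : x + (ℓ - y) = (x - y) + ℓ := by omega
    rw [h2, Nat.add_mod_right, Nat.mod_eq_of_lt (by omega), if_pos h]
  · rw [Nat.mod_eq_of_lt (by omega), if_neg (not_le.mpr h)]; omega

lemma zmod_val_sub_one {ℓ : ℕ} [NeZero ℓ] (h1 : 1 < ℓ) (z : ZMod ℓ) (hz : 1 ≤ z.val) :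
    (z - 1).val = z.val - 1 := by
  have hz' : ((z.val : ℕ) : ZMod ℓ) = z := ZMod.natCast_rightInverse z
  have h := zmod_sub_val (ℓ := ℓ) (x := z.val) (y := 1) (ZMod.val_lt z) h1
  rw [hz', Nat.cast_one, if_pos hz] at h
  exact h

lemma window_pos_eq {ℓ s : ℕ} [NeZero ℓ] (hs : s ≤ ℓ) (i : ZMod ℓ) :
    Finset.image (fun j : Fin s => i + (j : ℕ)) Finset.univ
      = Finset.univ.filter (fun x : ZMod ℓ => (x - i).val < s) := by
  ext x
  simp only [Finset.mem_image, Finset.mem_univ, true_and, Finset.mem_filter]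
  constructor
  · rintro ⟨j, rfl⟩
    have h : (i + ((j : ℕ) : ZMod ℓ) - i) = ((j : ℕ) : ZMod ℓ) := by ring
    rw [h, ZMod.val_natCast, Nat.mod_eq_of_lt (lt_of_lt_of_le j.2 hs)]
    exact j.2
  · intro hx
    refine ⟨⟨(x - i).val, hx⟩, ?_⟩
    have h : (((x - i).val : ℕ) : ZMod ℓ) = x - i := ZMod.natCast_rightInverse _
    show i + (((x - i).val : ℕ) : ZMod ℓ) = x
    rw [h]; ring

lemma downclosed_eq_range {U : Finset ℕ} {a r : ℕ} (hU : U ⊆ Finset.range a)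
    (hdc : ∀ u w, u < w → w ∈ U → u ∈ U) (hcard : U.card = r) : U = Finset.range r := by
  have hsub : U ⊆ Finset.range r := by
    intro x hx
    rw [Finset.mem_range]
    by_contra hxr
    push_neg at hxr
    have hss : Finset.range (x+1) ⊆ U := by
      intro u hu
      rw [Finset.mem_range] at hu
      rcases eq_or_lt_of_le (Nat.lt_succ_iff.mp hu) with h | h
      · rwa [h]
      · exact hdc u x h hx
    have := Finset.card_le_card hss
    rw [Finset.card_range, hcard] at this
    omega
  exact Finset.eq_of_subset_of_card_le hsub (by rw [Finset.card_range, hcard])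

set_option maxHeartbeats 1600000 in
lemma cyclic_enum {ℓ s r a : ℕ} [NeZero ℓ] (hs : 0 < s) (hsl : s ≤ ℓ) (hr : 0 < r) (hra : r ≤ a)
    (P : Finset (ZMod ℓ)) (hPa : P.card = a)
    (hcount : ∀ q ∈ P, (P.filter fun x => (x - q).val < s).card = r) :
    ∃ φ : ZMod a → ZMod ℓ, Function.Injective φ ∧ (∀ m, φ m ∈ P) ∧
      ∀ m : ZMod a, (Finset.image (fun j : Fin r => φ (m + (j : ℕ))) Finset.univ)
          = P.filter fun x => (x - φ m).val < s := by
  have ha : 0 < a := lt_of_lt_of_le hr hra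
  haveI : NeZero a := ⟨ha.ne'⟩
  -- sorted enumeration of P by val
  set Q : Finset ℕ := P.image ZMod.val with hQdef
  have hQcard : Q.card = a := by
    rw [hQdef, Finset.card_image_of_injective _ (ZMod.val_injective ℓ), hPa]
  set T := Q.orderIsoOfFin hQcard with hT
  set N : Fin a → ℕ := fun i => (T i : ℕ) with hN
  have hNmono : StrictMono N := fun i j hij => by
    exact T.strictMono hij
  have hNQ : ∀ i, N i ∈ Q := fun i => (T i).2
  have hNback : ∀ i : Fin a, ((N i : ℕ) : ZMod ℓ) ∈ P ∧ ((N i : ℕ) : ZMod ℓ).val = N i := by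
    intro i
    obtain ⟨p, hp, hpv⟩ := Finset.mem_image.mp (hNQ i)
    have : ((N i : ℕ) : ZMod ℓ) = p := by rw [← hpv]; exact ZMod.natCast_rightInverse p
    rw [this, hpv]
    exact ⟨hp, rfl⟩
  have hNlt : ∀ i, N i < ℓ := fun i => (hNback i).2 ▸ ZMod.val_lt _
  set φ : ZMod a → ZMod ℓ := fun m => ((N ⟨m.val, ZMod.val_lt m⟩ : ℕ) : ZMod ℓ) with hφ
  have hφP : ∀ m, φ m ∈ P := fun m => (hNback _).1
  have hφval : ∀ m, (φ m).val = N ⟨m.val, ZMod.val_lt m⟩ := fun m => (hNback _).2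
  have hφinj : Function.Injective φ := by
    intro m m' h
    have h2 : N ⟨m.val, ZMod.val_lt m⟩ = N ⟨m'.val, ZMod.val_lt m'⟩ := by
      rw [← hφval m, ← hφval m', h]
    have h3 := hNmono.injective h2
    exact ZMod.val_injective a (congrArg Fin.val h3)
  refine ⟨φ, hφinj, hφP, fun m => ?_⟩
  set mi := m.val with hmi
  have hmia : mi < a := ZMod.val_lt m
  set q := φ m with hq
  set f : ℕ → ZMod ℓ := fun u => φ (m + (u : ℕ)) with hf
  have hvalu : ∀ u : ℕ, (m + (u : ℕ)).val = (mi + u) % a := by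
    intro u
    rw [ZMod.val_add, ZMod.val_natCast, ← hmi]
    conv_rhs => rw [Nat.add_mod, Nat.mod_eq_of_lt hmia]
  -- explicit formulas for the cyclic distance
  have hrho1 : ∀ u (h : mi + u < a), (f u - q).val = N ⟨mi+u, h⟩ - N ⟨mi, hmia⟩ := by
    intro u h
    have hidx : (⟨(m + (u:ℕ)).val, ZMod.val_lt _⟩ : Fin a) = ⟨mi+u, h⟩ :=
      Fin.ext (by simp only [hvalu, Nat.mod_eq_of_lt h])
    have hfu : f u = ((N ⟨mi+u, h⟩ : ℕ) : ZMod ℓ) := by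
      show ((N ⟨(m + (u:ℕ)).val, ZMod.val_lt _⟩ : ℕ) : ZMod ℓ) = _
      rw [hidx]
    have hq' : q = ((N ⟨mi, hmia⟩ : ℕ) : ZMod ℓ) := rfl
    rw [hfu, hq', zmod_sub_val (hNlt _) (hNlt _),
      if_pos (hNmono.monotone (show (⟨mi, hmia⟩ : Fin a) ≤ ⟨mi+u, h⟩ by
        simp [Fin.le_def]))]
  have hrho2 : ∀ u (hu : u < a) (h : a ≤ mi + u),
      (f u - q).val = N ⟨mi+u-a, by omega⟩ + ℓ - N ⟨mi, hmia⟩ := by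
    intro u hu h
    have hmod : (mi + u) % a = mi + u - a := by
      have h2 : mi + u = (mi + u - a) + a := by omega
      conv_lhs => rw [h2]
      rw [Nat.add_mod_right, Nat.mod_eq_of_lt (by omega)]
    have hidx : (⟨(m + (u:ℕ)).val, ZMod.val_lt _⟩ : Fin a) = ⟨mi+u-a, by omega⟩ :=
      Fin.ext (by simp only [hvalu, hmod])
    have hfu : f u = ((N ⟨mi+u-a, by omega⟩ : ℕ) : ZMod ℓ) := by
      show ((N ⟨(m + (u:ℕ)).val, ZMod.val_lt _⟩ : ℕ) : ZMod ℓ) = _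
      rw [hidx]
    have hq' : q = ((N ⟨mi, hmia⟩ : ℕ) : ZMod ℓ) := rfl
    have hlt : N ⟨mi+u-a, by omega⟩ < N ⟨mi, hmia⟩ := by
      apply hNmono
      simp only [Fin.lt_def]
      omega
    rw [hfu, hq', zmod_sub_val (hNlt _) (hNlt _), if_neg (not_le.mpr hlt)]
  -- strict monotonicity of cyclic distance
  have hmono : ∀ u w, u < w → w < a → (f u - q).val < (f w - q).val := by
    intro u w huw hwa
    rcases lt_or_ge (mi + w) a with hw1 | hw2
    · have hu1 : mi + u < a := by omega
      rw [hrho1 u hu1, hrho1 w hw1]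
      have h1 : N ⟨mi+u, hu1⟩ < N ⟨mi+w, hw1⟩ := hNmono (by simp [Fin.lt_def]; omega)
      have h2 : N ⟨mi, hmia⟩ ≤ N ⟨mi+u, hu1⟩ :=
        hNmono.monotone (show (⟨mi, hmia⟩ : Fin a) ≤ _ by simp [Fin.le_def])
      omega
    · rcases lt_or_ge (mi + u) a with hu1 | hu2
      · rw [hrho1 u hu1, hrho2 w hwa hw2]
        have h2 : N ⟨mi, hmia⟩ ≤ N ⟨mi+u, hu1⟩ :=
          hNmono.monotone (show (⟨mi, hmia⟩ : Fin a) ≤ _ by simp [Fin.le_def])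
        have h3 := hNlt ⟨mi+u, hu1⟩
        have h4 := hNlt ⟨mi, hmia⟩
        omega
      · rw [hrho2 u (by omega) hu2, hrho2 w hwa hw2]
        have h1 : N ⟨mi+u-a, by omega⟩ < N ⟨mi+w-a, by omega⟩ :=
          hNmono (by simp [Fin.lt_def]; omega)
        have h4 := hNlt ⟨mi, hmia⟩
        omega
  -- f is injective on range a, and its image is P
  have hfinjOn : ∀ u < a, ∀ w < a, f u = f w → u = w := by
    intro u hu w hw hfw
    have h1 : m + (u:ℕ) = m + (w:ℕ) := hφinj hfw
    have h2 : ((u:ℕ) : ZMod a) = ((w:ℕ) : ZMod a) := by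
      exact add_left_cancel h1
    have h3 := congrArg ZMod.val h2
    rwa [ZMod.val_natCast, ZMod.val_natCast, Nat.mod_eq_of_lt hu, Nat.mod_eq_of_lt hw] at h3
  have hinjOn : Set.InjOn f (Finset.range a) := by
    intro u hu w hw h
    exact hfinjOn u (Finset.mem_range.mp hu) w (Finset.mem_range.mp hw) h
  have himg : (Finset.range a).image f = P := by
    apply Finset.eq_of_subset_of_card_le
    · intro x hx
      obtain ⟨u, _, rfl⟩ := Finset.mem_image.mp hx
      exact hφP _
    · rw [hPa, Finset.card_image_of_injOn hinjOn, Finset.card_range]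
  -- the set of positions within cyclic distance < s is an initial segment
  set U := (Finset.range a).filter (fun u => (f u - q).val < s) with hUdef
  have hS2 : P.filter (fun x => (x - q).val < s) = U.image f := by
    rw [← himg, Finset.filter_image]
  have hUcard : U.card = r := by
    have := hcount q (hφP m)
    rw [hS2, Finset.card_image_of_injOn (hinjOn.mono (by
      intro x hx; exact Finset.mem_coe.mpr (Finset.mem_of_mem_filter x (by exact hx))))] at this
    exact this
  have hUrange : U = Finset.range r := by
    apply downclosed_eq_range (Finset.filter_subset _ _) _ hUcard
    intro u w huw hwU
    obtain ⟨hwr, hws⟩ := Finset.mem_filter.mp hwU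
    rw [Finset.mem_range] at hwr
    exact Finset.mem_filter.mpr ⟨Finset.mem_range.mpr (by omega),
      lt_trans (hmono u w huw hwr) hws⟩
  have hfin : Finset.image (fun j : Fin r => f (j : ℕ)) Finset.univ = (Finset.range r).image f := by
    ext x
    simp only [Finset.mem_image, Finset.mem_univ, true_and, Finset.mem_range, Fin.exists_iff]
    constructor
    · rintro ⟨j, hj, rfl⟩; exact ⟨j, hj, rfl⟩
    · rintro ⟨j, hj, rfl⟩; exact ⟨j, hj, rfl⟩
  calc Finset.image (fun j : Fin r => φ (m + ((j : ℕ) : ZMod a))) Finset.univ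
      = (Finset.range r).image f := hfin
    _ = U.image f := by rw [hUrange]
    _ = P.filter (fun x => (x - φ m).val < s) := hS2.symm

set_option maxHeartbeats 1600000 in
theorem union_construction_tightCycleFree {A B : Type*} [DecidableEq A] [DecidableEq B]
    (r r' k t : ℕ) (hr : 0 < r) (hr' : 0 < r') (hk : 0 < k) (ht : 0 < t)
    (G : Fin t → Set (Finset A)) (H : Fin t → Set (Finset B))
    (hGunif : ∀ i, ∀ e ∈ G i, e.card = r)
    (hHunif : ∀ i, ∀ f ∈ H i, f.card = r')
    (hGdisj : ∀ i j, i ≠ j → Disjoint (G i) (G j))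
    (hHdisj : ∀ i j, i ≠ j → Disjoint (H i) (H j))
    (hGshort : ∀ i, ∀ ℓ, r < ℓ → ℓ ≤ r * k → ¬ IsTightCycleIn r ℓ (G i))
    (hHlong : ∀ i, ∀ ℓ, r' < ℓ → r' * k < ℓ → ¬ IsTightCycleIn r' ℓ (H i)) :
    TightCycleFree (r + r')
      ({g | ∃ (i : Fin t) (e : Finset A) (f : Finset B), e ∈ G i ∧ f ∈ H i ∧
          g = e.image Sum.inl ∪ f.image Sum.inr} : Set (Finset (A ⊕ B))) := by
  rintro ⟨ℓ, hℓ, v, hvinj, hall⟩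
  set s := r + r' with hsdef
  haveI : NeZero ℓ := ⟨by omega⟩
  have hs0 : 0 < s := by omega
  have hsl : s < ℓ := hℓ
  simp only [Set.mem_setOf_eq] at hall
  choose σ E F hEG hFH hWef using hall
  have hwin : ∀ i : ZMod ℓ, tightWindow s v i
      = (Finset.univ.filter (fun x : ZMod ℓ => (x - i).val < s)).image v := by
    intro i
    rw [← window_pos_eq hsl.le i, Finset.image_image]
    rfl
  classical
  set P : Finset (ZMod ℓ) := Finset.univ.filter (fun x => (v x).isLeft) with hPdef
  set P' : Finset (ZMod ℓ) := Finset.univ.filter (fun x => (v x).isRight) with hP'def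
  have himgL : ∀ i : ZMod ℓ, (P.filter (fun x => (x - i).val < s)).image v
      = (E i).image Sum.inl := by
    intro i
    have h2 : ((Finset.univ.filter (fun x : ZMod ℓ => (x - i).val < s)).image v).filter
          (fun g : A ⊕ B => g.isLeft)
        = ((E i).image Sum.inl ∪ (F i).image Sum.inr).filter (fun g => g.isLeft) := by
      rw [← hwin i, hWef i]
    rw [Finset.filter_image, Finset.filter_union, Finset.filter_image, Finset.filter_image] at h2
    simp only [Sum.isLeft_inl, Sum.isLeft_inr, eq_self_iff_true, Bool.false_eq_true,
      Finset.filter_true, Finset.filter_false, Finset.image_empty, Finset.union_empty] at h2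
    rw [← h2]
    congr 1
    ext x
    simp only [Finset.mem_filter, Finset.mem_univ, true_and, hPdef]
    tauto
  have himgR : ∀ i : ZMod ℓ, (P'.filter (fun x => (x - i).val < s)).image v
      = (F i).image Sum.inr := by
    intro i
    have h2 : ((Finset.univ.filter (fun x : ZMod ℓ => (x - i).val < s)).image v).filter
          (fun g : A ⊕ B => g.isRight)
        = ((E i).image Sum.inl ∪ (F i).image Sum.inr).filter (fun g => g.isRight) := by
      rw [← hwin i, hWef i]
    rw [Finset.filter_image, Finset.filter_union, Finset.filter_image, Finset.filter_image] at h2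
    simp only [Sum.isRight_inl, Sum.isRight_inr, eq_self_iff_true, Bool.false_eq_true,
      Finset.filter_true, Finset.filter_false, Finset.image_empty, Finset.empty_union] at h2
    rw [← h2]
    congr 1
    ext x
    simp only [Finset.mem_filter, Finset.mem_univ, true_and, hP'def]
    tauto
  have hcntL : ∀ i : ZMod ℓ, (P.filter (fun x => (x - i).val < s)).card = r := by
    intro i
    have h := congrArg Finset.card (himgL i)
    rw [Finset.card_image_of_injective _ hvinj,
      Finset.card_image_of_injective _ Sum.inl_injective] at h
    rw [h]; exact hGunif (σ i) (E i) (hEG i)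
  have hcntR : ∀ i : ZMod ℓ, (P'.filter (fun x => (x - i).val < s)).card = r' := by
    intro i
    have h := congrArg Finset.card (himgR i)
    rw [Finset.card_image_of_injective _ hvinj,
      Finset.card_image_of_injective _ Sum.inr_injective] at h
    rw [h]; exact hHunif (σ i) (F i) (hFH i)
  -- total count: |Pp| * s = ℓ * c
  have hposinj : ∀ i : ZMod ℓ, Function.Injective (fun j : Fin s => i + ((j : ℕ) : ZMod ℓ)) := by
    intro i j j' h
    simp only at h
    have h1 := add_left_cancel h
    have h2 := congrArg ZMod.val h1
    rw [ZMod.val_natCast, ZMod.val_natCast, Nat.mod_eq_of_lt (lt_of_lt_of_le j.2 hsl.le),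
      Nat.mod_eq_of_lt (lt_of_lt_of_le j'.2 hsl.le)] at h2
    exact Fin.ext h2
  have hposcard : ∀ i : ZMod ℓ,
      (Finset.univ.filter (fun x : ZMod ℓ => (x - i).val < s)).card = s := by
    intro i
    rw [← window_pos_eq hsl.le i, Finset.card_image_of_injective _ (hposinj i),
      Finset.card_univ, Fintype.card_fin]
  have hsum : ∀ (Pp : Finset (ZMod ℓ)) (c : ℕ),
      (∀ i : ZMod ℓ, (Pp.filter (fun x => (x - i).val < s)).card = c) →
      Pp.card * s = ℓ * c := by
    intro Pp c hc
    have h1 : ∑ i : ZMod ℓ, (Pp.filter (fun x => (x - i).val < s)).card = ℓ * c := by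
      rw [Finset.sum_congr rfl (fun i _ => hc i), Finset.sum_const, Finset.card_univ,
        ZMod.card, smul_eq_mul]
    rw [← h1]
    simp only [Finset.card_filter]
    rw [Finset.sum_comm]
    have h3 : ∀ x : ZMod ℓ, (∑ i : ZMod ℓ, if (x - i).val < s then 1 else 0) = s := by
      intro x
      rw [← Finset.card_filter]
      have h4 : Finset.univ.filter (fun i : ZMod ℓ => (x - i).val < s)
          = (Finset.univ.filter (fun y : ZMod ℓ => (y - 0).val < s)).image (fun y => x - y) := by
        ext i
        simp only [Finset.mem_filter, Finset.mem_univ, true_and, Finset.mem_image, sub_zero]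
        constructor
        · intro h
          exact ⟨x - i, h, sub_sub_cancel x i⟩
        · rintro ⟨y, hy, rfl⟩
          rwa [sub_sub_cancel]
      rw [h4, Finset.card_image_of_injective _ sub_right_injective]
      exact hposcard 0
    rw [Finset.sum_congr rfl (fun x _ => h3 x), Finset.sum_const, smul_eq_mul]
  have hAs : P.card * s = ℓ * r := hsum P r hcntL
  have hBs : P'.card * s = ℓ * r' := hsum P' r' hcntR
  have key : ∀ {x c : ℕ}, 0 < c → x * s = ℓ * c → c < x := by
    intro x c hc hx
    by_contra hcon
    push_neg at hcon
    have h1 : x * s ≤ c * s := Nat.mul_le_mul_right s hcon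
    rw [hx, mul_comm ℓ c] at h1
    have h2 : ℓ ≤ s := Nat.le_of_mul_le_mul_left h1 hc
    omega
  have hra : r < P.card := key hr hAs
  have hrb : r' < P'.card := key hr' hBs
  -- periodicity of the colour pattern
  have hvalzero : ∀ x i : ZMod ℓ, (x - i).val = 0 → x = i := by
    intro x i h
    have h1 : x - i = 0 := by
      have h2 := ZMod.natCast_rightInverse (x - i)
      rw [h] at h2
      simpa using h2.symm
    have := sub_eq_zero.mp h1
    exact this
  have hvs : ((s : ℕ) : ZMod ℓ).val = s := ZMod.val_cast_of_lt hsl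
  have hshift : ∀ (i x : ZMod ℓ), x ≠ i → x ≠ i + (s:ℕ) →
      ((x - (i+1)).val < s ↔ (x - i).val < s) := by
    intro i x hxi hxis
    have hd1 : 1 ≤ (x - i).val := by
      rcases Nat.eq_zero_or_pos (x - i).val with h | h
      · exact absurd (hvalzero x i h) hxi
      · exact h
    have hds : (x - i).val ≠ s := by
      intro h
      apply hxis
      have h3 : x - i = ((s:ℕ) : ZMod ℓ) := by
        have h2 := ZMod.natCast_rightInverse (x - i)
        rw [h] at h2
        exact h2.symm
      have : x = (x - i) + i := by ring
      rw [this, h3]; ring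
    have hstep : x - (i+1) = (x - i) - 1 := by ring
    rw [hstep, zmod_val_sub_one (by omega) _ hd1]
    omega
  have hvend : ∀ i : ZMod ℓ, (i - (i+1)).val = ℓ - 1 := by
    intro i
    have h : i - (i+1) = ((0:ℕ):ZMod ℓ) - ((1:ℕ):ZMod ℓ) := by push_cast; ring
    rw [h, zmod_sub_val (by omega) (by omega), if_neg (by omega)]
    omega
  have hvend2 : ∀ i : ZMod ℓ, (i + (s:ℕ) - (i+1)).val = s - 1 := by
    intro i
    have h : i + (s:ℕ) - (i+1) = ((s:ℕ):ZMod ℓ) - ((1:ℕ):ZMod ℓ) := by push_cast; ring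
    rw [h, zmod_sub_val hsl (by omega), if_pos (by omega)]
  have hvends : ∀ i : ZMod ℓ, (i + (s:ℕ) - i).val = s := by
    intro i
    have h : i + (s:ℕ) - i = ((s:ℕ):ZMod ℓ) := by ring
    rw [h, hvs]
  have hfiltershift : ∀ (Pp : Finset (ZMod ℓ)) (i : ZMod ℓ),
      (Pp.filter (fun x => (x - (i+1)).val < s)).erase (i + (s:ℕ))
        = (Pp.filter (fun x => (x - i).val < s)).erase i := by
    intro Pp i
    ext x
    simp only [Finset.mem_erase, Finset.mem_filter]
    constructor
    · rintro ⟨hx1, hx2, hx3⟩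
      have hxi : x ≠ i := by
        rintro rfl
        rw [hvend x] at hx3
        omega
      exact ⟨hxi, hx2, (hshift i x hxi hx1).mp hx3⟩
    · rintro ⟨hx1, hx2, hx3⟩
      have hxis : x ≠ i + (s:ℕ) := by
        rintro rfl
        rw [hvends i] at hx3
        omega
      exact ⟨hxis, hx2, (hshift i x hx1 hxis).mpr hx3⟩
  have hmemiff : ∀ (Pp : Finset (ZMod ℓ)) (c : ℕ), 0 < c →
      (∀ i, (Pp.filter (fun x => (x - i).val < s)).card = c) →
      ∀ i : ZMod ℓ, (i ∈ Pp ↔ i + (s:ℕ) ∈ Pp) := by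
    intro Pp c hc hcard i
    have herase := hfiltershift Pp i
    constructor
    · intro hiP
      by_contra hcon
      have e1 : (Pp.filter (fun x => (x - (i+1)).val < s)).erase (i + (s:ℕ))
          = Pp.filter (fun x => (x - (i+1)).val < s) :=
        Finset.erase_eq_of_notMem (fun hm => hcon (Finset.mem_filter.mp hm).1)
      have hiS1 : i ∈ Pp.filter (fun x => (x - i).val < s) :=
        Finset.mem_filter.mpr ⟨hiP, by rw [sub_self, ZMod.val_zero]; omega⟩
      have hcards := congrArg Finset.card (e1.symm.trans herase)
      rw [hcard (i+1), Finset.card_erase_of_mem hiS1, hcard i] at hcards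
      omega
    · intro hiP
      by_contra hcon
      have e1 : (Pp.filter (fun x => (x - i).val < s)).erase i
          = Pp.filter (fun x => (x - i).val < s) :=
        Finset.erase_eq_of_notMem (fun hm => hcon (Finset.mem_filter.mp hm).1)
      have hiS2 : i + (s:ℕ) ∈ Pp.filter (fun x => (x - (i+1)).val < s) :=
        Finset.mem_filter.mpr ⟨hiP, by rw [hvend2 i]; omega⟩
      have hcards := congrArg Finset.card (herase.trans e1)
      rw [hcard i, Finset.card_erase_of_mem hiS2, hcard (i+1)] at hcards
      omega
  have hperL : ∀ i : ZMod ℓ, (i ∈ P ↔ i + (s:ℕ) ∈ P) := hmemiff P r hr hcntL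
  have hPP' : ∀ x, x ∈ P' ↔ x ∉ P := by
    intro x
    rw [hPdef, hP'def, Finset.mem_filter, Finset.mem_filter]
    cases v x <;> simp
  have hEdet : ∀ i i' : ZMod ℓ, E i = E i' → σ i = σ i' := by
    intro i i' h
    by_contra hne
    exact Set.disjoint_left.mp (hGdisj _ _ hne) (hEG i) (by rw [h]; exact hEG i')
  have hFdet : ∀ i i' : ZMod ℓ, F i = F i' → σ i = σ i' := by
    intro i i' h
    by_contra hne
    exact Set.disjoint_left.mp (hHdisj _ _ hne) (hFH i) (by rw [h]; exact hFH i')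
  have hstepσ : ∀ i : ZMod ℓ, σ i = σ (i + 1) := by
    intro i
    by_cases hiP : i ∈ P
    · have hisP : i + (s:ℕ) ∈ P := (hperL i).mp hiP
      have hiP' : i ∉ P' := fun h => (hPP' i).mp h hiP
      have hisP' : i + (s:ℕ) ∉ P' := fun h => (hPP' _).mp h hisP
      have hset : P'.filter (fun x => (x - (i+1)).val < s)
          = P'.filter (fun x => (x - i).val < s) := by
        have h1 := hfiltershift P' i
        rw [Finset.erase_eq_of_notMem (fun hm => hisP' (Finset.mem_filter.mp hm).1),
            Finset.erase_eq_of_notMem (fun hm => hiP' (Finset.mem_filter.mp hm).1)] at h1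
        exact h1
      have himg' := himgR (i+1)
      rw [hset, himgR i] at himg'
      exact hFdet _ _ (Finset.image_injective Sum.inr_injective himg')
    · have hisP : i + (s:ℕ) ∉ P := fun h => hiP ((hperL i).mpr h)
      have hset : P.filter (fun x => (x - (i+1)).val < s)
          = P.filter (fun x => (x - i).val < s) := by
        have h1 := hfiltershift P i
        rw [Finset.erase_eq_of_notMem (fun hm => hisP (Finset.mem_filter.mp hm).1),
            Finset.erase_eq_of_notMem (fun hm => hiP (Finset.mem_filter.mp hm).1)] at h1
        exact h1
      have himg' := himgL (i+1)
      rw [hset, himgL i] at himg'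
      exact hEdet _ _ (Finset.image_injective Sum.inl_injective himg')
  have hσ0 : ∀ i : ZMod ℓ, σ i = σ 0 := by
    have hn : ∀ n : ℕ, σ ((n : ℕ) : ZMod ℓ) = σ 0 := by
      intro n
      induction n with
      | zero => simp
      | succ n ih =>
        have : ((n + 1 : ℕ) : ZMod ℓ) = ((n : ℕ) : ZMod ℓ) + 1 := by push_cast; ring
        rw [this, ← hstepσ]
        exact ih
    intro i
    have h := ZMod.natCast_rightInverse i
    rw [← h]
    exact hn i.val
  -- Side A: extract a tight cycle in G (σ 0) of length P.card
  obtain ⟨φ, hφinj, hφP, hφwin⟩ := cyclic_enum hs0 hsl.le hr hra.le P rfl (fun q _ => hcntL q)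
  have hwchoice : ∀ m : ZMod P.card, ∃ x : A, v (φ m) = Sum.inl x := by
    intro m
    have h := hφP m
    rw [hPdef, Finset.mem_filter] at h
    exact Sum.isLeft_iff.mp h.2
  choose w hw using hwchoice
  have hwinj : Function.Injective w := by
    intro m m' h
    apply hφinj
    apply hvinj
    rw [hw m, hw m', h]
  have hwwin : ∀ m, tightWindow r w m = E (φ m) := by
    intro m
    apply Finset.image_injective (f := (Sum.inl : A → A ⊕ B)) Sum.inl_injective
    show (Finset.image (fun j : Fin r => w (m + (j:ℕ))) Finset.univ).image Sum.inl = _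
    rw [Finset.image_image]
    have h1 : (Sum.inl ∘ fun j : Fin r => w (m + (j:ℕ)))
        = fun j : Fin r => v (φ (m + (j:ℕ))) := by
      funext j
      exact (hw _).symm
    rw [h1]
    have h2 : (fun j : Fin r => v (φ (m + (j:ℕ))))
        = v ∘ (fun j : Fin r => φ (m + (j:ℕ))) := rfl
    rw [h2, ← Finset.image_image, hφwin m, himgL (φ m)]
  have hcycA : IsTightCycleIn r P.card (G (σ 0)) := by
    refine ⟨w, hwinj, fun m => ?_⟩
    rw [hwwin m, ← hσ0 (φ m)]
    exact hEG (φ m)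
  have haK : r * k < P.card := by
    by_contra hcon
    push_neg at hcon
    exact hGshort (σ 0) P.card hra hcon hcycA
  -- arithmetic: P'.card > r' * k
  have hbK : r' * k < P'.card := by
    by_contra hcon
    push_neg at hcon
    have h1 : r * (P'.card * s) = r' * (P.card * s) := by
      rw [hAs, hBs]
      ring
    have h2 : r * (P'.card * s) ≤ r * ((r' * k) * s) :=
      Nat.mul_le_mul_left r (Nat.mul_le_mul_right s hcon)
    rw [h1] at h2
    have h3 : r * ((r' * k) * s) = r' * ((r * k) * s) := by ring
    rw [h3] at h2
    have h4 : P.card * s ≤ (r * k) * s := Nat.le_of_mul_le_mul_left h2 hr'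
    have h5 : P.card ≤ r * k := Nat.le_of_mul_le_mul_right h4 hs0
    omega
  -- Side B: extract a tight cycle in H (σ 0) of length P'.card
  obtain ⟨ψ, hψinj, hψP, hψwin⟩ := cyclic_enum hs0 hsl.le hr' hrb.le P' rfl (fun q _ => hcntR q)
  have hw'choice : ∀ m : ZMod P'.card, ∃ x : B, v (ψ m) = Sum.inr x := by
    intro m
    have h := hψP m
    rw [hP'def, Finset.mem_filter] at h
    exact Sum.isRight_iff.mp h.2
  choose w' hw' using hw'choice
  have hw'inj : Function.Injective w' := by
    intro m m' h
    apply hψinj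
    apply hvinj
    rw [hw' m, hw' m', h]
  have hw'win : ∀ m, tightWindow r' w' m = F (ψ m) := by
    intro m
    apply Finset.image_injective (f := (Sum.inr : B → A ⊕ B)) Sum.inr_injective
    show (Finset.image (fun j : Fin r' => w' (m + (j:ℕ))) Finset.univ).image Sum.inr = _
    rw [Finset.image_image]
    have h1 : (Sum.inr ∘ fun j : Fin r' => w' (m + (j:ℕ)))
        = fun j : Fin r' => v (ψ (m + (j:ℕ))) := by
      funext j
      exact (hw' _).symm
    rw [h1]
    have h2 : (fun j : Fin r' => v (ψ (m + (j:ℕ))))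
        = v ∘ (fun j : Fin r' => ψ (m + (j:ℕ))) := rfl
    rw [h2, ← Finset.image_image, hψwin m, himgR (ψ m)]
  have hcycB : IsTightCycleIn r' P'.card (H (σ 0)) := by
    refine ⟨w', hw'inj, fun m => ?_⟩
    rw [hw'win m, ← hσ0 (ψ m)]
    exact hFH (ψ m)
  exact hHlong (σ 0) P'.card hrb hbK hcycB
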